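/- arXiv:1506.02298 — 2 statements merged into one kernel-verified Lean document; each statement's English description precedes it below -/
import Mathlib

section
/- Under Assumption 1, if the initial distribution is p₀ = δ_M (the Dirac measure at M), then the sequence (p_i)_{i≥0} converges in total variation to a probability measure p* on [0,M]; moreover (p_i)_{[0,M)} ≺ (p_{i+1})_{[0,M)} ≺ (p*)_{[0,M)} for every i ≥ 0. -/
open MeasureTheory Set Filter
open scoped ENNReal NNReal

/-- Selective advantage `s(x,u) = w(x,u) / ∫ w(y,u) u(dy)` if the mean fitness is
positive, and `1` otherwise. -/
noncomputable def sel (w : ℝ → MeasureTheory.Measure ℝ → ℝ)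
    (u : MeasureTheory.Measure ℝ) (x : ℝ) : ℝ :=
  if 0 < ∫ y, w y u ∂u then w x u / ∫ y, w y u ∂u else 1

/-- The sequence of type distributions:
`p_i(dx) = (1-β) s(x,p_{i-1}) p_{i-1}(dx) + β q(dx)`. -/
noncomputable def evol (w : ℝ → MeasureTheory.Measure ℝ → ℝ) (β : ℝ)
    (q p₀ : MeasureTheory.Measure ℝ) : ℕ → MeasureTheory.Measure ℝ
  | 0 => p₀
  | i + 1 =>
      ENNReal.ofReal (1 - β) •
          ((evol w β q p₀ i).withDensity fun x =>
            ENNReal.ofReal (sel w (evol w β q p₀ i) x))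
        + ENNReal.ofReal β • q

/-- Convergence in total variation (uniform convergence over all measurable sets). -/
def TendstoTV (p : ℕ → MeasureTheory.Measure ℝ) (μ : MeasureTheory.Measure ℝ) : Prop :=
  ∀ ε : ℝ, 0 < ε → ∃ N : ℕ, ∀ i ≥ N, ∀ A : Set ℝ, MeasurableSet A →
    |((p i) A).toReal - (μ A).toReal| < ε

/-- Weak convergence of measures (tested against bounded continuous functions). -/
def TendstoWeak (p : ℕ → MeasureTheory.Measure ℝ) (μ : MeasureTheory.Measure ℝ) : Prop :=
  ∀ f : BoundedContinuousFunction ℝ ℝ,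
    Filter.Tendsto (fun i => ∫ x, f x ∂(p i)) Filter.atTop (nhds (∫ x, f x ∂μ))

/-- Assumption 1: if `v` restricted to `[0,M)` is a component of `u` restricted to `[0,M)`,
then `s(·,u) ≥ s(·,v)` on `[0,M]`. -/
def Assumption1 (M : ℝ) (w : ℝ → MeasureTheory.Measure ℝ → ℝ) : Prop :=
  ∀ u v : MeasureTheory.Measure ℝ,
    IsProbabilityMeasure u → IsProbabilityMeasure v →
    u ((Set.Icc 0 M)ᶜ) = 0 → v ((Set.Icc 0 M)ᶜ) = 0 →
    v.restrict (Set.Ico 0 M) ≤ u.restrict (Set.Ico 0 M) →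
    ∀ x ∈ Set.Icc (0:ℝ) M, sel w v x ≤ sel w u x

/-- Assumption 2: for every `0 ≤ a < M` and `0 < ε < 1` there is `c(a,ε) > 1` such that
`s(M,u) ≥ c(a,ε) s(M,v)` whenever `v_{[0,M)} ≺ u_{[0,M)}` and `D_u(a) ≥ D_v(a) + ε`. -/
def Assumption2 (M : ℝ) (w : ℝ → MeasureTheory.Measure ℝ → ℝ) : Prop :=
  ∀ a : ℝ, 0 ≤ a → a < M → ∀ ε : ℝ, 0 < ε → ε < 1 → ∃ c : ℝ, 1 < c ∧
    ∀ u v : MeasureTheory.Measure ℝ,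
      IsProbabilityMeasure u → IsProbabilityMeasure v →
      u ((Set.Icc 0 M)ᶜ) = 0 → v ((Set.Icc 0 M)ᶜ) = 0 →
      v.restrict (Set.Ico 0 M) ≤ u.restrict (Set.Ico 0 M) →
      (v (Set.Icc 0 a)).toReal + ε ≤ (u (Set.Icc 0 a)).toReal →
      c * sel w v M ≤ sel w u M

lemma sel_nonneg {w : ℝ → Measure ℝ → ℝ} (hw : ∀ x u, 0 ≤ w x u)
    (u : Measure ℝ) (x : ℝ) : 0 ≤ sel w u x := by
  unfold sel; split
  · exact div_nonneg (hw x u) (by positivity)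
  · exact zero_le_one

lemma sel_meas {w : ℝ → Measure ℝ → ℝ} (hw : ∀ u, Measurable fun x => w x u)
    (u : Measure ℝ) : Measurable fun x => ENNReal.ofReal (sel w u x) := by
  unfold sel
  by_cases h : 0 < ∫ y, w y u ∂u
  · simp only [if_pos h]
    exact (((hw u).div_const _)).ennreal_ofReal
  · simp only [if_neg h]
    exact measurable_const

lemma withDensity_sel_univ {w : ℝ → Measure ℝ → ℝ} (hw : ∀ x u, 0 ≤ w x u)
    (u : Measure ℝ) [IsProbabilityMeasure u] :
    (u.withDensity fun x => ENNReal.ofReal (sel w u x)) univ = 1 := by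
  rw [withDensity_apply _ MeasurableSet.univ, Measure.restrict_univ]
  by_cases h : 0 < ∫ y, w y u ∂u
  · have hint : Integrable (fun y => w y u) u := by
      by_contra hni
      rw [integral_undef hni] at h
      exact lt_irrefl 0 h
    have hnn : 0 ≤ᵐ[u] fun y => w y u / ∫ y, w y u ∂u :=
      Eventually.of_forall fun y => div_nonneg (hw y u) h.le
    have : ∫⁻ x, ENNReal.ofReal (sel w u x) ∂u
        = ENNReal.ofReal (∫ x, w x u / ∫ y, w y u ∂u ∂u) := by
      rw [ofReal_integral_eq_lintegral_ofReal (hint.div_const _) hnn]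
      unfold sel
      simp only [if_pos h]
    rw [this, integral_div, div_self h.ne', ENNReal.ofReal_one]
  · unfold sel
    simp only [if_neg h, ENNReal.ofReal_one, lintegral_one, measure_univ]

lemma tsum_iSup_swap {f : ℕ → ℕ → ℝ≥0∞} (hf : ∀ n, Monotone fun i => f i n) :
    ∑' n, ⨆ i, f i n = ⨆ i, ∑' n, f i n := by
  simp_rw [ENNReal.tsum_eq_iSup_sum]
  rw [iSup_comm]
  exact iSup_congr fun F => ENNReal.finsetSum_iSup_of_monotone fun n => hf n

section step
variable {M β : ℝ} {w : ℝ → Measure ℝ → ℝ} {q u v : Measure ℝ}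

/-- One evolution step preserves probability + support in `[0,M]`. -/
lemma step_prob (hβ : β ∈ Set.Ioo (0:ℝ) 1)
    [IsProbabilityMeasure q] (hq : q ((Set.Icc 0 M)ᶜ) = 0)
    (hw_nonneg : ∀ x u, 0 ≤ w x u)
    [IsProbabilityMeasure u] (hu : u ((Set.Icc 0 M)ᶜ) = 0) :
    IsProbabilityMeasure
        (ENNReal.ofReal (1 - β) •
          (u.withDensity fun x => ENNReal.ofReal (sel w u x)) + ENNReal.ofReal β • q) ∧
      (ENNReal.ofReal (1 - β) •
          (u.withDensity fun x => ENNReal.ofReal (sel w u x)) + ENNReal.ofReal β • q)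
        ((Set.Icc 0 M)ᶜ) = 0 := by
  constructor
  · constructor
    rw [Measure.add_apply, Measure.smul_apply, Measure.smul_apply,
      withDensity_sel_univ hw_nonneg, measure_univ, smul_eq_mul, smul_eq_mul,
      mul_one, mul_one, ← ENNReal.ofReal_add (by linarith [hβ.2]) hβ.1.le]
    norm_num
  · rw [Measure.add_apply, Measure.smul_apply, Measure.smul_apply,
      withDensity_apply _ (measurableSet_Icc.compl),
      Measure.restrict_eq_zero.2 hu, lintegral_zero_measure, hq]
    simp

/-- One evolution step is monotone on `[0,M)` (uses Assumption 1). -/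
lemma step_mono (hA1 : Assumption1 M w)
    (hw_meas : ∀ u, Measurable fun x => w x u)
    [IsProbabilityMeasure u] [IsProbabilityMeasure v]
    (hu : u ((Set.Icc 0 M)ᶜ) = 0) (hv : v ((Set.Icc 0 M)ᶜ) = 0)
    (hvu : v.restrict (Set.Ico 0 M) ≤ u.restrict (Set.Ico 0 M)) :
    (ENNReal.ofReal (1 - β) •
          (v.withDensity fun x => ENNReal.ofReal (sel w v x)) + ENNReal.ofReal β • q).restrict
        (Set.Ico 0 M) ≤
      (ENNReal.ofReal (1 - β) •
          (u.withDensity fun x => ENNReal.ofReal (sel w u x)) + ENNReal.ofReal β • q).restrict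
        (Set.Ico 0 M) := by
  have key : (v.withDensity fun x => ENNReal.ofReal (sel w v x)).restrict (Set.Ico 0 M) ≤
      (u.withDensity fun x => ENNReal.ofReal (sel w u x)).restrict (Set.Ico 0 M) := by
    rw [Measure.le_iff]
    intro s hs
    rw [Measure.restrict_apply hs, Measure.restrict_apply hs,
      withDensity_apply _ (hs.inter measurableSet_Ico),
      withDensity_apply _ (hs.inter measurableSet_Ico)]
    calc ∫⁻ x in s ∩ Set.Ico 0 M, ENNReal.ofReal (sel w v x) ∂v
        ≤ ∫⁻ x in s ∩ Set.Ico 0 M, ENNReal.ofReal (sel w u x) ∂v := by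
          refine setLIntegral_mono (sel_meas hw_meas u) fun x hx => ?_
          refine ENNReal.ofReal_le_ofReal ?_
          exact hA1 u v ‹_› ‹_› hu hv hvu x (Set.Ico_subset_Icc_self hx.2)
      _ ≤ ∫⁻ x in s ∩ Set.Ico 0 M, ENNReal.ofReal (sel w u x) ∂u := by
          refine lintegral_mono' ?_ le_rfl
          rw [← Measure.restrict_restrict hs, ← Measure.restrict_restrict hs]
          exact Measure.restrict_mono (subset_refl s) hvu
  rw [Measure.restrict_add, Measure.restrict_add, Measure.restrict_smul,
    Measure.restrict_smul, Measure.restrict_smul]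
  refine Measure.le_iff.2 fun s hs => ?_
  simp only [Measure.add_apply, Measure.smul_apply, smul_eq_mul]
  exact add_le_add (mul_le_mul_right (Measure.le_iff.1 key s hs) _) le_rfl

end step

/-- Theorem 3 of the paper. Under Assumption 1, starting from `p₀ = δ_M`
the sequence `(p_i)` converges in total variation to a probability measure `p*` on `[0,M]`,
and `(p_i)_{[0,M)} ≺ (p_{i+1})_{[0,M)} ≺ (p*)_{[0,M)}` for every `i`. -/
theorem stmt0 (M : ℝ) (hM : 0 < M) (β : ℝ) (hβ : β ∈ Set.Ioo (0:ℝ) 1)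
    (q : MeasureTheory.Measure ℝ) [IsProbabilityMeasure q] (hq : q ((Set.Icc 0 M)ᶜ) = 0)
    (w : ℝ → MeasureTheory.Measure ℝ → ℝ)
    (hw_nonneg : ∀ x u, 0 ≤ w x u)
    (hw_meas : ∀ u, Measurable fun x => w x u)
    (hA1 : Assumption1 M w) :
    ∃ pstar : MeasureTheory.Measure ℝ, IsProbabilityMeasure pstar ∧
      pstar ((Set.Icc 0 M)ᶜ) = 0 ∧
      TendstoTV (evol w β q (MeasureTheory.Measure.dirac M)) pstar ∧
      ∀ i : ℕ,
        (evol w β q (MeasureTheory.Measure.dirac M) i).restrict (Set.Ico 0 M) ≤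
          (evol w β q (MeasureTheory.Measure.dirac M) (i + 1)).restrict (Set.Ico 0 M) ∧
        (evol w β q (MeasureTheory.Measure.dirac M) (i + 1)).restrict (Set.Ico 0 M) ≤
          pstar.restrict (Set.Ico 0 M) := by
  set P : ℕ → Measure ℝ := evol w β q (Measure.dirac M) with hP
  have hev : ∀ i, P (i + 1) =
      ENNReal.ofReal (1 - β) •
        ((P i).withDensity fun x => ENNReal.ofReal (sel w (P i) x)) + ENNReal.ofReal β • q :=
    fun i => rfl
  have hMIcc : M ∈ Set.Icc (0:ℝ) M := ⟨hM.le, le_refl M⟩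
  have hPP : ∀ i, IsProbabilityMeasure (P i) ∧ P i ((Set.Icc 0 M)ᶜ) = 0 := by
    intro i
    induction i with
    | zero =>
      constructor
      · exact Measure.dirac.isProbabilityMeasure
      · rw [show P 0 = Measure.dirac M from rfl,
          Measure.dirac_apply' _ measurableSet_Icc.compl]
        simp [hMIcc]
    | succ i ih =>
      haveI := ih.1
      rw [hev i]
      exact step_prob hβ hq hw_nonneg ih.2
  have hmono : ∀ i, (P i).restrict (Set.Ico 0 M) ≤ (P (i+1)).restrict (Set.Ico 0 M) := by
    intro i
    induction i with
    | zero =>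
      have : (P 0).restrict (Set.Ico 0 M) = 0 := by
        rw [Measure.restrict_eq_zero, show P 0 = Measure.dirac M from rfl,
          Measure.dirac_apply' _ measurableSet_Ico]
        simp
      rw [this]; exact Measure.zero_le _
    | succ i ih =>
      haveI := (hPP i).1; haveI := (hPP (i+1)).1
      rw [hev i, hev (i+1)]
      exact step_mono hA1 hw_meas (hPP (i+1)).2 (hPP i).2 ih
  have hmono' : Monotone fun i => (P i).restrict (Set.Ico 0 M) :=
    monotone_nat_of_le_succ hmono
  have hmset : ∀ s : Set ℝ, MeasurableSet s → Monotone fun i => P i (s ∩ Set.Ico 0 M) := by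
    intro s hs i j hij
    have := Measure.le_iff.1 (hmono' hij) s hs
    rwa [Measure.restrict_apply hs, Measure.restrict_apply hs] at this
  -- limit measure on [0,M)
  have h0 : (fun s : Set ℝ => ⨆ i, P i (s ∩ Set.Ico 0 M)) ∅ = 0 := by simp
  have hadd : ∀ (g : ℕ → Set ℝ), (∀ n, MeasurableSet (g n)) → Pairwise (Function.onFun Disjoint g) →
      (⨆ i, P i ((⋃ n, g n) ∩ Set.Ico 0 M)) = ∑' n, ⨆ i, P i (g n ∩ Set.Ico 0 M) := by
    intro g hg hd
    have h1 : ∀ i, P i ((⋃ n, g n) ∩ Set.Ico 0 M) = ∑' n, P i (g n ∩ Set.Ico 0 M) := by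
      intro i
      rw [Set.iUnion_inter]
      exact measure_iUnion
        (fun m n hmn => (hd hmn).mono Set.inter_subset_left Set.inter_subset_left)
        (fun n => (hg n).inter measurableSet_Ico)
    simp_rw [h1]
    exact (tsum_iSup_swap fun n => hmset (g n) (hg n)).symm
  set lam : Measure ℝ := Measure.ofMeasurable
      (fun s _ => ⨆ i, P i (s ∩ Set.Ico 0 M)) h0 (fun g hg hd => hadd g hg hd) with hlam
  have lam_apply : ∀ s : Set ℝ, MeasurableSet s →
      lam s = ⨆ i, P i (s ∩ Set.Ico 0 M) := fun s hs => Measure.ofMeasurable_apply s hs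
  set L : ℝ≥0∞ := ⨆ i, P i (Set.Ico 0 M) with hLdef
  have hlamIco : lam (Set.Ico 0 M) = L := by
    rw [lam_apply _ measurableSet_Ico, Set.inter_self]
  have hL1 : L ≤ 1 := by
    refine iSup_le fun i => ?_
    haveI := (hPP i).1
    exact prob_le_one
  have hLtop : L ≠ ⊤ := (hL1.trans_lt (by norm_num)).ne
  have hlamuniv : lam Set.univ = L := by
    rw [lam_apply _ MeasurableSet.univ, Set.univ_inter]
  haveI hlamfin : IsFiniteMeasure lam :=
    ⟨by rw [hlamuniv]; exact hL1.trans_lt (by norm_num)⟩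
  set pstar : Measure ℝ := lam + ((1:ℝ≥0∞) - L) • Measure.dirac M with hpstar
  have hdiracIcc : Measure.dirac M ((Set.Icc 0 M)ᶜ) = 0 := by
    rw [Measure.dirac_apply' _ measurableSet_Icc.compl]
    simp [hMIcc]
  have lam_inter : ∀ s : Set ℝ, MeasurableSet s →
      lam (s ∩ Set.Ico 0 M) = ⨆ i, P i (s ∩ Set.Ico 0 M) := by
    intro s hs
    rw [lam_apply _ (hs.inter measurableSet_Ico), Set.inter_assoc, Set.inter_self]
  refine ⟨pstar, ?_, ?_, ?_, ?_⟩
  · constructor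
    rw [hpstar, Measure.add_apply, Measure.smul_apply, hlamuniv, measure_univ,
      smul_eq_mul, mul_one]
    exact add_tsub_cancel_of_le hL1
  · rw [hpstar, Measure.add_apply, Measure.smul_apply, hdiracIcc, smul_eq_mul, mul_zero,
      add_zero, lam_apply _ measurableSet_Icc.compl]
    have : (Set.Icc (0:ℝ) M)ᶜ ∩ Set.Ico 0 M = ∅ := by
      rw [Set.eq_empty_iff_forall_notMem]
      rintro x ⟨hc, hx⟩
      exact hc (Set.Ico_subset_Icc_self hx)
    simp [this]
  · -- total variation convergence
    intro ε hε
    have hml : Monotone fun i => P i (Set.Ico 0 M) := by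
      have := hmset Set.univ MeasurableSet.univ
      simpa using this
    have hten : Tendsto (fun i => P i (Set.Ico 0 M)) atTop (nhds L) :=
      tendsto_atTop_iSup hml
    have htenR : Tendsto (fun i => (P i (Set.Ico 0 M)).toReal) atTop (nhds L.toReal) :=
      (ENNReal.tendsto_toReal hLtop).comp hten
    obtain ⟨N, hN⟩ := Metric.tendsto_atTop.1 htenR (ε/2) (half_pos hε)
    refine ⟨N, fun i hi A hA => ?_⟩
    haveI := (hPP i).1
    have hu1t : P i (A ∩ Set.Ico 0 M) ≠ ⊤ := measure_ne_top _ _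
    have hu2t : P i (Aᶜ ∩ Set.Ico 0 M) ≠ ⊤ := measure_ne_top _ _
    have hv1t : lam (A ∩ Set.Ico 0 M) ≠ ⊤ := measure_ne_top _ _
    have hv2t : lam (Aᶜ ∩ Set.Ico 0 M) ≠ ⊤ := measure_ne_top _ _
    have hMt : P i {M} ≠ ⊤ := measure_ne_top _ _
    have hlt : P i (Set.Ico 0 M) ≠ ⊤ := measure_ne_top _ _
    have f1 : P i (A ∩ Set.Ico 0 M) ≤ lam (A ∩ Set.Ico 0 M) := by
      rw [lam_inter _ hA]
      exact le_iSup (fun j => P j (A ∩ Set.Ico 0 M)) i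
    have f2 : P i (Aᶜ ∩ Set.Ico 0 M) ≤ lam (Aᶜ ∩ Set.Ico 0 M) := by
      rw [lam_inter _ hA.compl]
      exact le_iSup (fun j => P j (Aᶜ ∩ Set.Ico 0 M)) i
    have hsplit : (A ∩ Set.Ico 0 M) ∪ (Aᶜ ∩ Set.Ico 0 M) = Set.Ico 0 M := by
      rw [← Set.union_inter_distrib_right, Set.union_compl_self, Set.univ_inter]
    have hdisj : Disjoint (A ∩ Set.Ico 0 M) (Aᶜ ∩ Set.Ico 0 M) :=
      (disjoint_compl_right).mono Set.inter_subset_left Set.inter_subset_left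
    have f3 : P i (A ∩ Set.Ico 0 M) + P i (Aᶜ ∩ Set.Ico 0 M) = P i (Set.Ico 0 M) := by
      rw [← measure_union hdisj (hA.compl.inter measurableSet_Ico), hsplit]
    have f4 : lam (A ∩ Set.Ico 0 M) + lam (Aᶜ ∩ Set.Ico 0 M) = L := by
      rw [← measure_union hdisj (hA.compl.inter measurableSet_Ico), hsplit, hlamIco]
    have hIccsplit : Set.Ico 0 M ∪ {M} = Set.Icc (0:ℝ) M := Set.Ico_union_right hM.le
    have hdisjM : Disjoint (Set.Ico (0:ℝ) M) ({M} : Set ℝ) := by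
      rw [Set.disjoint_singleton_right]
      simp
    have f5 : P i A = P i (A ∩ Set.Ico 0 M) + P i (A ∩ {M}) := by
      rw [← measure_inter_conull (μ := P i) (s := A) (hPP i).2, ← hIccsplit,
        Set.inter_union_distrib_left,
        measure_union (hdisjM.mono Set.inter_subset_right Set.inter_subset_right)
          (hA.inter (measurableSet_singleton M))]
    have f7 : P i (Set.Ico 0 M) + P i {M} = 1 := by
      rw [← measure_union hdisjM (measurableSet_singleton M), hIccsplit,
        show Set.Icc (0:ℝ) M = Set.univ ∩ Set.Icc (0:ℝ) M from (Set.univ_inter _).symm,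
        measure_inter_conull (hPP i).2, measure_univ]
    have f6 : pstar A = lam (A ∩ Set.Ico 0 M) + ((1:ℝ≥0∞) - L) * A.indicator 1 M := by
      rw [hpstar, Measure.add_apply, Measure.smul_apply, smul_eq_mul,
        lam_apply _ hA, Measure.dirac_apply' _ hA, ← lam_inter _ hA, lam_apply _
          (hA.inter measurableSet_Ico)]
    have hlN := hN i hi
    rw [Real.dist_eq] at hlN
    have hli : (P i (Set.Ico 0 M)).toReal ≤ L.toReal := by
      refine ENNReal.toReal_le_toReal hlt hLtop |>.2 ?_
      exact le_iSup (fun j => P j (Set.Ico 0 M)) i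
    have hlN' : L.toReal - (P i (Set.Ico 0 M)).toReal < ε/2 := by
      rw [abs_sub_comm] at hlN
      calc L.toReal - (P i (Set.Ico 0 M)).toReal
          ≤ |L.toReal - (P i (Set.Ico 0 M)).toReal| := le_abs_self _
        _ < ε/2 := hlN
    have r1 : (P i (A ∩ Set.Ico 0 M)).toReal ≤ (lam (A ∩ Set.Ico 0 M)).toReal :=
      ENNReal.toReal_le_toReal hu1t hv1t |>.2 f1
    have r2 : (P i (Aᶜ ∩ Set.Ico 0 M)).toReal ≤ (lam (Aᶜ ∩ Set.Ico 0 M)).toReal :=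
      ENNReal.toReal_le_toReal hu2t hv2t |>.2 f2
    have r3 : (P i (A ∩ Set.Ico 0 M)).toReal + (P i (Aᶜ ∩ Set.Ico 0 M)).toReal
        = (P i (Set.Ico 0 M)).toReal := by
      rw [← ENNReal.toReal_add hu1t hu2t, f3]
    have r4 : (lam (A ∩ Set.Ico 0 M)).toReal + (lam (Aᶜ ∩ Set.Ico 0 M)).toReal = L.toReal := by
      rw [← ENNReal.toReal_add hv1t hv2t, f4]
    have r7 : (P i (Set.Ico 0 M)).toReal + (P i {M}).toReal = 1 := by
      rw [← ENNReal.toReal_add hlt hMt, f7, ENNReal.toReal_one]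
    have rsub : ((1:ℝ≥0∞) - L).toReal = 1 - L.toReal := by
      rw [ENNReal.toReal_sub_of_le hL1 ENNReal.one_ne_top, ENNReal.toReal_one]
    by_cases hMA : M ∈ A
    · have hAM : A ∩ {M} = {M} :=
        Set.inter_eq_self_of_subset_right (Set.singleton_subset_iff.2 hMA)
      have e1 : (P i A).toReal = (P i (A ∩ Set.Ico 0 M)).toReal + (P i {M}).toReal := by
        rw [f5, hAM, ENNReal.toReal_add hu1t hMt]
      have e2 : (pstar A).toReal = (lam (A ∩ Set.Ico 0 M)).toReal + (1 - L.toReal) := by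
        rw [f6, Set.indicator_of_mem hMA, Pi.one_apply, mul_one,
          ENNReal.toReal_add hv1t (by simp [hLtop, ENNReal.sub_ne_top]), rsub]
      rw [e1, e2, abs_lt]
      constructor <;> linarith
    · have hAM : A ∩ {M} = ∅ := Set.inter_singleton_eq_empty.2 hMA
      have e1 : (P i A).toReal = (P i (A ∩ Set.Ico 0 M)).toReal := by
        rw [f5, hAM, measure_empty, add_zero]
      have e2 : (pstar A).toReal = (lam (A ∩ Set.Ico 0 M)).toReal := by
        rw [f6, Set.indicator_of_notMem hMA, mul_zero, add_zero]
      rw [e1, e2, abs_lt]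
      constructor <;> linarith
  · -- monotone chain
    intro i
    refine ⟨hmono i, ?_⟩
    refine Measure.le_iff.2 fun s hs => ?_
    rw [Measure.restrict_apply hs, Measure.restrict_apply hs]
    calc P (i+1) (s ∩ Set.Ico 0 M)
        ≤ ⨆ j, P j (s ∩ Set.Ico 0 M) := le_iSup (fun j => P j (s ∩ Set.Ico 0 M)) (i+1)
      _ = lam (s ∩ Set.Ico 0 M) := (lam_inter s hs).symm
      _ ≤ pstar (s ∩ Set.Ico 0 M) := by
          rw [hpstar, Measure.add_apply]
          exact self_le_add_right _ _
end

section
/- Under Assumption 1, let ĥ₀ and h₀ be two initial type distributions in P(𝓜), with the same mutant distribution q, and let (ĥ_i)_{i≥0} and (h_i)_{i≥0} be the corresponding sequences. If (ĥ₀)_{[0,M)} ≺ (h₀)_{[0,M)} (hence ĥ₀({M}) ≥ h₀({M})), then for every i ≥ 1, (ĥ_i)_{[0,M)} ≺ (h_i)_{[0,M)} and ĥ_i({M}) ≥ h_i({M}). -/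
open MeasureTheory Set Filter

section Aux

variable {w : ℝ → MeasureTheory.Measure ℝ → ℝ}

lemma sel_measurable (hw_meas : ∀ u, Measurable fun x => w x u)
    (u : MeasureTheory.Measure ℝ) : Measurable (sel w u) := by
  unfold sel
  split_ifs with h
  · exact (hw_meas u).div_const _
  · exact measurable_const

lemma lintegral_ofReal_sel (hw_nonneg : ∀ x u, 0 ≤ w x u)
    (u : MeasureTheory.Measure ℝ) [IsProbabilityMeasure u] :
    ∫⁻ x, ENNReal.ofReal (sel w u x) ∂u = 1 := by
  unfold sel
  split_ifs with h
  · have hint : Integrable (fun y => w y u) u := by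
      by_contra hc
      rw [integral_undef hc] at h
      exact lt_irrefl 0 h
    have h1 : ∫ x, w x u / (∫ y, w y u ∂u) ∂u = 1 := by
      rw [integral_div]
      field_simp
    calc ∫⁻ x, ENNReal.ofReal (w x u / ∫ y, w y u ∂u) ∂u
        = ENNReal.ofReal (∫ x, w x u / (∫ y, w y u ∂u) ∂u) := by
          rw [ofReal_integral_eq_lintegral_ofReal (hint.div_const _)
            (ae_of_all _ fun x => div_nonneg (hw_nonneg x u) h.le)]
      _ = 1 := by rw [h1, ENNReal.ofReal_one]
  · simp

lemma evol_prob (hw_nonneg : ∀ x u, 0 ≤ w x u) {β : ℝ} (hβ : β ∈ Set.Ioo (0:ℝ) 1)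
    (q p₀ : MeasureTheory.Measure ℝ) [IsProbabilityMeasure q] [IsProbabilityMeasure p₀] :
    ∀ i, IsProbabilityMeasure (evol w β q p₀ i) := by
  intro i
  induction i with
  | zero => simpa [evol] using ‹IsProbabilityMeasure p₀›
  | succ i ih =>
    constructor
    have h1 : ((evol w β q p₀ i).withDensity fun x =>
        ENNReal.ofReal (sel w (evol w β q p₀ i) x)) Set.univ = 1 := by
      rw [withDensity_apply _ MeasurableSet.univ, Measure.restrict_univ]
      exact lintegral_ofReal_sel hw_nonneg _
    show (ENNReal.ofReal (1 - β) • _ + ENNReal.ofReal β • q) Set.univ = 1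
    rw [Measure.add_apply, Measure.smul_apply, Measure.smul_apply, h1,
      measure_univ, smul_eq_mul, smul_eq_mul, mul_one, mul_one,
      ← ENNReal.ofReal_add (by linarith [hβ.2]) (le_of_lt hβ.1)]
    norm_num

lemma evol_supp {M : ℝ} (hw_meas : ∀ u, Measurable fun x => w x u) {β : ℝ}
    (q p₀ : MeasureTheory.Measure ℝ)
    (hq : q ((Set.Icc 0 M)ᶜ) = 0) (hp₀ : p₀ ((Set.Icc 0 M)ᶜ) = 0) :
    ∀ i, (evol w β q p₀ i) ((Set.Icc 0 M)ᶜ) = 0 := by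
  intro i
  induction i with
  | zero => simpa [evol] using hp₀
  | succ i ih =>
    show (ENNReal.ofReal (1 - β) • _ + ENNReal.ofReal β • q) ((Set.Icc (0:ℝ) M)ᶜ) = 0
    rw [Measure.add_apply, Measure.smul_apply, Measure.smul_apply,
      withDensity_apply _ (measurableSet_Icc.compl),
      Measure.restrict_eq_zero.mpr ih]
    simp [hq]

end Aux

/-- Lemma 9 of the paper. Under Assumption 1, if
`(ĥ₀)_{[0,M)} ≺ (h₀)_{[0,M)}`, then for every `i ≥ 1`,
`(ĥ_i)_{[0,M)} ≺ (h_i)_{[0,M)}` and `ĥ_i({M}) ≥ h_i({M})`. -/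
theorem stmt11 (M : ℝ) (hM : 0 < M) (β : ℝ) (hβ : β ∈ Set.Ioo (0:ℝ) 1)
    (q : MeasureTheory.Measure ℝ) [IsProbabilityMeasure q] (hq : q ((Set.Icc 0 M)ᶜ) = 0)
    (w : ℝ → MeasureTheory.Measure ℝ → ℝ)
    (hw_nonneg : ∀ x u, 0 ≤ w x u)
    (hw_meas : ∀ u, Measurable fun x => w x u)
    (hA1 : Assumption1 M w)
    (hhat₀ h₀ : MeasureTheory.Measure ℝ)
    [IsProbabilityMeasure hhat₀] [IsProbabilityMeasure h₀]
    (hhat₀supp : hhat₀ ((Set.Icc 0 M)ᶜ) = 0) (h₀supp : h₀ ((Set.Icc 0 M)ᶜ) = 0)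
    (hcomp : hhat₀.restrict (Set.Ico 0 M) ≤ h₀.restrict (Set.Ico 0 M)) :
    ∀ i : ℕ, 1 ≤ i →
      (evol w β q hhat₀ i).restrict (Set.Ico 0 M) ≤
        (evol w β q h₀ i).restrict (Set.Ico 0 M) ∧
      (evol w β q h₀ i) ({M} : Set ℝ) ≤ (evol w β q hhat₀ i) ({M} : Set ℝ) := by
  have probh : ∀ i, IsProbabilityMeasure (evol w β q h₀ i) :=
    evol_prob hw_nonneg hβ q h₀
  have probhat : ∀ i, IsProbabilityMeasure (evol w β q hhat₀ i) :=
    evol_prob hw_nonneg hβ q hhat₀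
  have supph : ∀ i, (evol w β q h₀ i) ((Set.Icc 0 M)ᶜ) = 0 :=
    evol_supp hw_meas q h₀ hq h₀supp
  have supphat : ∀ i, (evol w β q hhat₀ i) ((Set.Icc 0 M)ᶜ) = 0 :=
    evol_supp hw_meas q hhat₀ hq hhat₀supp
  -- main monotonicity invariant, valid for all i (including 0)
  have key : ∀ i, (evol w β q hhat₀ i).restrict (Set.Ico 0 M) ≤
      (evol w β q h₀ i).restrict (Set.Ico 0 M) := by
    intro i
    induction i with
    | zero => exact hcomp
    | succ i ih =>
      set u := evol w β q h₀ i with hu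
      set v := evol w β q hhat₀ i with hv
      haveI := probh i; haveI := probhat i
      have hsel : ∀ x ∈ Set.Icc (0:ℝ) M, sel w v x ≤ sel w u x :=
        hA1 u v (probh i) (probhat i) (supph i) (supphat i) ih
      rw [Measure.le_iff]
      intro s hs
      rw [Measure.restrict_apply hs, Measure.restrict_apply hs]
      have hmeas : MeasurableSet (s ∩ Set.Ico 0 M) := hs.inter measurableSet_Ico
      have hcore : (v.withDensity fun x => ENNReal.ofReal (sel w v x)) (s ∩ Set.Ico 0 M)
          ≤ (u.withDensity fun x => ENNReal.ofReal (sel w u x)) (s ∩ Set.Ico 0 M) := by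
        rw [withDensity_apply _ hmeas, withDensity_apply _ hmeas]
        have hrest : v.restrict (s ∩ Set.Ico 0 M) ≤ u.restrict (s ∩ Set.Ico 0 M) := by
          calc v.restrict (s ∩ Set.Ico 0 M)
              = (v.restrict (Set.Ico 0 M)).restrict s := (Measure.restrict_restrict hs).symm
            _ ≤ (u.restrict (Set.Ico 0 M)).restrict s := Measure.restrict_mono subset_rfl ih
            _ = u.restrict (s ∩ Set.Ico 0 M) := Measure.restrict_restrict hs
        calc ∫⁻ x in s ∩ Set.Ico 0 M, ENNReal.ofReal (sel w v x) ∂v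
            ≤ ∫⁻ x in s ∩ Set.Ico 0 M, ENNReal.ofReal (sel w u x) ∂v := by
              refine setLIntegral_mono ((ENNReal.measurable_ofReal.comp
                (sel_measurable hw_meas u))) fun x hx => ?_
              exact ENNReal.ofReal_le_ofReal (hsel x ⟨hx.2.1, hx.2.2.le⟩)
          _ ≤ ∫⁻ x in s ∩ Set.Ico 0 M, ENNReal.ofReal (sel w u x) ∂u :=
              lintegral_mono' hrest le_rfl
      show (ENNReal.ofReal (1 - β) • _ + ENNReal.ofReal β • q) (s ∩ Set.Ico 0 M)
        ≤ (ENNReal.ofReal (1 - β) • _ + ENNReal.ofReal β • q) (s ∩ Set.Ico 0 M)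
      simp only [Measure.add_apply, Measure.smul_apply, smul_eq_mul]
      exact add_le_add_left (mul_le_mul_right hcore _) _
  -- mass identity on `[0,M]`
  have mass : ∀ (μ : MeasureTheory.Measure ℝ), IsProbabilityMeasure μ →
      μ ((Set.Icc 0 M)ᶜ) = 0 → μ (Set.Ico 0 M) + μ ({M} : Set ℝ) = 1 := by
    intro μ hμ hsupp
    have hIcc : μ (Set.Icc 0 M) = 1 := by
      have h1 : μ (Set.Icc 0 M ∪ (Set.Icc 0 M)ᶜ) = μ (Set.Icc 0 M) + μ ((Set.Icc 0 M)ᶜ) :=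
        measure_union disjoint_compl_right measurableSet_Icc.compl
      simpa [hsupp] using h1.symm
    have hsplit : Set.Ico 0 M ∪ {M} = Set.Icc 0 M := Set.Ico_union_right hM.le
    have hdisj : Disjoint (Set.Ico 0 M) ({M} : Set ℝ) := by
      simp [Set.disjoint_singleton_right]
    rw [← hIcc, ← hsplit, measure_union hdisj (measurableSet_singleton M)]
  intro i _
  refine ⟨key i, ?_⟩
  haveI := probh i; haveI := probhat i
  have hIco : (evol w β q hhat₀ i) (Set.Ico 0 M) ≤ (evol w β q h₀ i) (Set.Ico 0 M) := by
    have := Measure.le_iff'.mp (key i) (Set.Ico 0 M)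
    simpa [Measure.restrict_apply measurableSet_Ico] using this
  have e1 := mass _ (probhat i) (supphat i)
  have e2 := mass _ (probh i) (supph i)
  have hb : (evol w β q hhat₀ i) ({M} : Set ℝ) = 1 - (evol w β q hhat₀ i) (Set.Ico 0 M) :=
    ENNReal.eq_sub_of_add_eq (measure_ne_top _ _) (by rw [add_comm]; exact e1)
  have hd : (evol w β q h₀ i) ({M} : Set ℝ) = 1 - (evol w β q h₀ i) (Set.Ico 0 M) :=
    ENNReal.eq_sub_of_add_eq (measure_ne_top _ _) (by rw [add_comm]; exact e2)
  rw [hb, hd]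
  exact tsub_le_tsub_left hIco 1
end
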